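/- Let A ∈ ℝ^{n×n} be eventually positive. If v₁ > 0 is any eigenvector of A with strictly positive entries, and v_r > 0 is a right eigenvector for the eigenvalue ρ(A) (the spectral radius) with positive entries, then v₁ is a scalar multiple of v_r. -/

import Mathlib

open Matrix

lemma aux_pow {n : ℕ} (A : Matrix (Fin n) (Fin n) ℝ) (v : Fin n → ℝ) (μ : ℝ)
    (h : A *ᵥ v = μ • v) : ∀ k, A ^ k *ᵥ v = μ ^ k • v := by
  intro k
  induction k with
  | zero => simp
  | succ k ih =>
    rw [pow_succ, ← mulVec_mulVec, h, mulVec_smul, ih, smul_smul, ← pow_succ']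

lemma aux_entry {n : ℕ} (A : Matrix (Fin n) (Fin n) ℝ) (v : Fin n → ℝ) (i : Fin n) :
    (A *ᵥ v) i = ∑ j, A i j * v j := by
  simp [mulVec, dotProduct]

lemma aux_pos {n : ℕ} (i0 : Fin n) (A : Matrix (Fin n) (Fin n) ℝ) (k₀ : ℕ)
    (hA : ∀ k ≥ k₀, ∀ i j, 0 < (A ^ k) i j)
    (v : Fin n → ℝ) (hv : ∀ i, 0 < v i) (μ : ℝ) (h : A *ᵥ v = μ • v) : 0 < μ := by
  have key : ∀ k ≥ k₀, 0 < μ ^ k := by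
    intro k hk
    have h2 : 0 < (A ^ k *ᵥ v) i0 := by
      rw [aux_entry]
      apply Finset.sum_pos
      · intro j _
        exact mul_pos (hA k hk i0 j) (hv j)
      · exact ⟨i0, Finset.mem_univ i0⟩
    rw [aux_pow A v μ h k] at h2
    simp only [Pi.smul_apply, smul_eq_mul] at h2
    nlinarith [hv i0]
  have h1 := key k₀ le_rfl
  have h2 := key (k₀ + 1) (by omega)
  rw [pow_succ] at h2
  nlinarith

lemma aux_le {n : ℕ} (i0 : Fin n) (A : Matrix (Fin n) (Fin n) ℝ) (k₀ : ℕ)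
    (hA : ∀ k ≥ k₀, ∀ i j, 0 < (A ^ k) i j)
    (u w : Fin n → ℝ) (hu : ∀ i, 0 < u i) (hw : ∀ i, 0 < w i)
    (μ ν : ℝ) (hμ : A *ᵥ u = μ • u) (hν : A *ᵥ w = ν • w)
    (hμpos : 0 < μ) (hνpos : 0 < ν) : ν ≤ μ := by
  -- minimal ratio c with c • w ≤ u
  obtain ⟨i₁, -, hmin⟩ := Finset.exists_min_image Finset.univ (fun i => u i / w i)
    ⟨i0, Finset.mem_univ i0⟩
  set c : ℝ := u i₁ / w i₁ with hc
  have hcpos : 0 < c := div_pos (hu i₁) (hw i₁)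
  have hcw : ∀ i, c * w i ≤ u i := by
    intro i
    have := hmin i (Finset.mem_univ i)
    calc c * w i ≤ (u i / w i) * w i := by
            exact mul_le_mul_of_nonneg_right this (hw i).le
      _ = u i := div_mul_cancel₀ _ (hw i).ne'
  have key : ∀ k ≥ k₀, c * (ν ^ k * w i0) ≤ μ ^ k * u i0 := by
    intro k hk
    have h1 : c * (A ^ k *ᵥ w) i0 ≤ (A ^ k *ᵥ u) i0 := by
      rw [aux_entry, aux_entry, Finset.mul_sum]
      apply Finset.sum_le_sum
      intro j _
      have h2 := hA k hk i0 j
      have h3 := hcw j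
      nlinarith
    rw [aux_pow A u μ hμ k, aux_pow A w ν hν k] at h1
    simpa using h1
  by_contra hlt
  push_neg at hlt
  set r : ℝ := ν / μ with hr
  have hr1 : 1 < r := (one_lt_div hμpos).mpr hlt
  obtain ⟨N, hN⟩ := pow_unbounded_of_one_lt (u i0 / (c * w i0)) hr1
  set k : ℕ := max N k₀ with hkdef
  have hk₀ : k₀ ≤ k := le_max_right _ _
  have hrk : u i0 / (c * w i0) < r ^ k :=
    lt_of_lt_of_le hN (pow_le_pow_right₀ hr1.le (le_max_left _ _))
  have hcw0 : 0 < c * w i0 := mul_pos hcpos (hw i0)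
  have hlt2 : u i0 < c * w i0 * r ^ k := by linarith [(div_lt_iff₀ hcw0).mp hrk]
  have hνeq : ν = μ * r := by
    rw [hr, mul_div_assoc', mul_div_cancel_left₀ _ hμpos.ne']
  have hkey := key k hk₀
  rw [hνeq, mul_pow] at hkey
  have hμk : 0 < μ ^ k := pow_pos hμpos k
  nlinarith

theorem stmt10 (n : ℕ) (A : Matrix (Fin n) (Fin n) ℝ)
    (hev : ∃ k₀ : ℕ, 1 ≤ k₀ ∧ ∀ k ≥ k₀, ∀ i j, 0 < (A ^ k) i j)
    (ρ : ℝ)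
    (hρ : IsGreatest {r : ℝ | ∃ μ ∈ spectrum ℂ (A.map (algebraMap ℝ ℂ)),
      ‖μ‖ = r} ρ)
    (v₁ : Fin n → ℝ) (hv₁pos : ∀ i, 0 < v₁ i)
    (μ₁ : ℝ) (hv₁ : A *ᵥ v₁ = μ₁ • v₁)
    (vᵣ : Fin n → ℝ) (hvᵣpos : ∀ i, 0 < vᵣ i)
    (hvᵣ : A *ᵥ vᵣ = ρ • vᵣ) :
    ∃ c : ℝ, v₁ = c • vᵣ := by
  rcases Nat.eq_zero_or_pos n with hn | hn
  · subst hn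
    exact ⟨0, funext fun i => i.elim0⟩
  have i0 : Fin n := ⟨0, hn⟩
  obtain ⟨k₀, hk₀1, hA⟩ := hev
  have hμpos : 0 < μ₁ := aux_pos i0 A k₀ hA v₁ hv₁pos μ₁ hv₁
  have hρpos : 0 < ρ := aux_pos i0 A k₀ hA vᵣ hvᵣpos ρ hvᵣ
  have h1 : ρ ≤ μ₁ := aux_le i0 A k₀ hA v₁ vᵣ hv₁pos hvᵣpos μ₁ ρ hv₁ hvᵣ hμpos hρpos
  have h2 : μ₁ ≤ ρ := aux_le i0 A k₀ hA vᵣ v₁ hvᵣpos hv₁pos ρ μ₁ hvᵣ hv₁ hρpos hμpos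
  have heq : μ₁ = ρ := le_antisymm h2 h1
  -- now the proportionality argument
  obtain ⟨i₁, -, hmin⟩ := Finset.exists_min_image Finset.univ (fun i => v₁ i / vᵣ i)
    ⟨i0, Finset.mem_univ i0⟩
  set c : ℝ := v₁ i₁ / vᵣ i₁ with hc
  have hcw : ∀ i, c * vᵣ i ≤ v₁ i := by
    intro i
    have := hmin i (Finset.mem_univ i)
    calc c * vᵣ i ≤ (v₁ i / vᵣ i) * vᵣ i :=
            mul_le_mul_of_nonneg_right this (hvᵣpos i).le
      _ = v₁ i := div_mul_cancel₀ _ (hvᵣpos i).ne'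
  have hceq : c * vᵣ i₁ = v₁ i₁ := div_mul_cancel₀ _ (hvᵣpos i₁).ne'
  have hsum : ∑ j, (A ^ k₀) i₁ j * (v₁ j - c * vᵣ j) = 0 := by
    have e1 : (A ^ k₀ *ᵥ v₁) i₁ = μ₁ ^ k₀ * v₁ i₁ := by
      rw [aux_pow A v₁ μ₁ hv₁ k₀]; simp
    have e2 : (A ^ k₀ *ᵥ vᵣ) i₁ = ρ ^ k₀ * vᵣ i₁ := by
      rw [aux_pow A vᵣ ρ hvᵣ k₀]; simp
    rw [aux_entry] at e1 e2
    have : ∑ j, (A ^ k₀) i₁ j * (v₁ j - c * vᵣ j)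
        = (∑ j, (A ^ k₀) i₁ j * v₁ j) - c * ∑ j, (A ^ k₀) i₁ j * vᵣ j := by
      rw [Finset.mul_sum, ← Finset.sum_sub_distrib]
      congr 1; funext j; ring
    rw [this, e1, e2, heq]
    rw [← hceq]; ring
  have hzero : ∀ j, v₁ j - c * vᵣ j = 0 := by
    intro j
    have hnn : ∀ j ∈ Finset.univ, (0:ℝ) ≤ (A ^ k₀) i₁ j * (v₁ j - c * vᵣ j) := by
      intro j _
      have := hA k₀ le_rfl i₁ j
      have := hcw j
      nlinarith
    have := (Finset.sum_eq_zero_iff_of_nonneg hnn).mp hsum j (Finset.mem_univ j)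
    have hApos := hA k₀ le_rfl i₁ j
    rcases mul_eq_zero.mp this with h | h
    · exact absurd h hApos.ne'
    · exact h
  refine ⟨c, funext fun j => ?_⟩
  have := hzero j
  simp only [Pi.smul_apply, smul_eq_mul]
  linarith
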